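/- Let n, m be positive integers, F an n×n real matrix, G an n×m real matrix, Q a symmetric n×n real matrix, S an n×m real matrix, R a symmetric positive-definite m×m real matrix, P a symmetric n×n real matrix satisfying the Algebraic Riccati Equation FᵀP + PF + Q = (PG + S)R⁻¹(PG + S)ᵀ, and K = −R⁻¹(PG + S)ᵀ. Suppose z : [0,∞) → ℝⁿ is differentiable, u : [0,∞) → ℝᵐ is continuous, ż(t) = Fz(t) + Gu(t) for all t ≥ 0, z(t) → 0 as t → ∞, and both t ↦ z(t)ᵀQz(t) + 2z(t)ᵀSu(t) + u(t)ᵀRu(t) and t ↦ (u(t) − Kz(t))ᵀR(u(t) − Kz(t)) are integrable on [0,∞). Then (1/2)∫₀^∞ (z(t)ᵀQz(t) + 2z(t)ᵀSu(t) + u(t)ᵀRu(t)) dt ≥ (1/2)z(0)ᵀPz(0), with equality if u(t) = Kz(t) for all t ≥ 0. In particular the linear feedback u = Kz is optimal among all such control trajectories. -/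

import Mathlib

open Matrix MeasureTheory Filter

lemma lqr_dot_aux {a b : ℕ} (A : Matrix (Fin a) (Fin b) ℝ) (x : Fin b → ℝ) (y : Fin a → ℝ) :
    (A *ᵥ x) ⬝ᵥ y = x ⬝ᵥ Aᵀ *ᵥ y := by
  rw [Matrix.dotProduct_mulVec, Matrix.vecMul_transpose]

theorem lqr_linear_feedback_optimal
    (n m : ℕ) (hn : 0 < n) (hm : 0 < m)
    (F P Q : Matrix (Fin n) (Fin n) ℝ)
    (G S : Matrix (Fin n) (Fin m) ℝ)
    (R : Matrix (Fin m) (Fin m) ℝ)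
    (K : Matrix (Fin m) (Fin n) ℝ)
    (hQ : Q.IsSymm) (hR : R.IsSymm) (hRpd : R.PosDef) (hP : P.IsSymm)
    (hARE : Fᵀ * P + P * F + Q = (P * G + S) * R⁻¹ * (P * G + S)ᵀ)
    (hK : K = -(R⁻¹ * (P * G + S)ᵀ))
    (z : ℝ → Fin n → ℝ) (u : ℝ → Fin m → ℝ)
    (hz : ∀ t ∈ Set.Ici (0:ℝ),
      HasDerivAt z (F.mulVec (z t) + G.mulVec (u t)) t)
    (hu : ContinuousOn u (Set.Ici (0:ℝ)))
    (hlim : Tendsto z atTop (nhds 0))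
    (hint1 : IntegrableOn
      (fun t => z t ⬝ᵥ Q.mulVec (z t) + 2 * (z t ⬝ᵥ S.mulVec (u t))
        + u t ⬝ᵥ R.mulVec (u t)) (Set.Ici (0:ℝ)))
    (hint2 : IntegrableOn
      (fun t => (u t - K.mulVec (z t)) ⬝ᵥ R.mulVec (u t - K.mulVec (z t)))
      (Set.Ici (0:ℝ))) :
    (1/2 : ℝ) * ∫ t in Set.Ici (0:ℝ),
        (z t ⬝ᵥ Q.mulVec (z t) + 2 * (z t ⬝ᵥ S.mulVec (u t))
          + u t ⬝ᵥ R.mulVec (u t))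
      ≥ (1/2 : ℝ) * (z 0 ⬝ᵥ P.mulVec (z 0))
    ∧ ((∀ t ∈ Set.Ici (0:ℝ), u t = K.mulVec (z t)) →
        (1/2 : ℝ) * ∫ t in Set.Ici (0:ℝ),
          (z t ⬝ᵥ Q.mulVec (z t) + 2 * (z t ⬝ᵥ S.mulVec (u t))
            + u t ⬝ᵥ R.mulVec (u t))
        = (1/2 : ℝ) * (z 0 ⬝ᵥ P.mulVec (z 0))) := by
  -- matrix algebra facts
  have hdet : IsUnit R.det := isUnit_iff_ne_zero.mpr (ne_of_gt hRpd.det_pos)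
  have hRinvT : R⁻¹ᵀ = R⁻¹ := by rw [Matrix.transpose_nonsing_inv, hR.eq]
  have hRK : R * K = -(P * G + S)ᵀ := by
    rw [hK, Matrix.mul_neg, ← Matrix.mul_assoc, Matrix.mul_nonsing_inv R hdet, Matrix.one_mul]
  have hKT : Kᵀ = -((P * G + S) * R⁻¹) := by
    rw [hK, Matrix.transpose_neg, Matrix.transpose_mul, Matrix.transpose_transpose, hRinvT]
  have hKTR : Kᵀ * R = -(P * G + S) := by
    rw [hKT, Matrix.neg_mul, Matrix.mul_assoc, Matrix.nonsing_inv_mul R hdet, Matrix.mul_one]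
  have hMK : (P * G + S) * K = -(Fᵀ * P + P * F + Q) := by
    rw [hK, Matrix.mul_neg, ← Matrix.mul_assoc, ← hARE]
  have hKRK : Kᵀ * R * K = Fᵀ * P + P * F + Q := by
    rw [hKTR, Matrix.neg_mul, hMK, neg_neg]
  -- the pointwise key identity
  have key : ∀ (x : Fin n → ℝ) (v : Fin m → ℝ),
      x ⬝ᵥ Q.mulVec x + 2 * (x ⬝ᵥ S.mulVec v) + v ⬝ᵥ R.mulVec v
      = (v - K.mulVec x) ⬝ᵥ R.mulVec (v - K.mulVec x)
        - ((F.mulVec x + G.mulVec v) ⬝ᵥ P.mulVec x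
            + x ⬝ᵥ P.mulVec (F.mulVec x + G.mulVec v)) := by
    intro x v
    have f1 : v ⬝ᵥ R *ᵥ (K *ᵥ x) = -(x ⬝ᵥ (P * G + S) *ᵥ v) := by
      rw [Matrix.mulVec_mulVec, hRK, Matrix.neg_mulVec, dotProduct_neg, ← lqr_dot_aux,
        dotProduct_comm]
    have f2 : (K *ᵥ x) ⬝ᵥ R *ᵥ v = -(x ⬝ᵥ (P * G + S) *ᵥ v) := by
      rw [lqr_dot_aux, Matrix.mulVec_mulVec, hKTR, Matrix.neg_mulVec, dotProduct_neg]
    have f3 : (K *ᵥ x) ⬝ᵥ R *ᵥ (K *ᵥ x) = x ⬝ᵥ (Fᵀ * P + P * F + Q) *ᵥ x := by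
      rw [lqr_dot_aux, Matrix.mulVec_mulVec, Matrix.mulVec_mulVec, hKRK]
    have f4 : (F *ᵥ x) ⬝ᵥ P *ᵥ x = x ⬝ᵥ (Fᵀ * P) *ᵥ x := by
      rw [lqr_dot_aux, Matrix.mulVec_mulVec]
    have f6 : (G *ᵥ v) ⬝ᵥ P *ᵥ x = x ⬝ᵥ (P * G) *ᵥ v := by
      rw [dotProduct_comm, lqr_dot_aux, Matrix.mulVec_mulVec, hP.eq]
    simp only [Matrix.mulVec_sub, dotProduct_sub, sub_dotProduct,
      Matrix.add_mulVec, Matrix.mulVec_add, dotProduct_add, add_dotProduct,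
      Matrix.mulVec_mulVec] at *
    rw [f1, f2, f3]
    ring_nf
    rw [f4, f6]
    ring_nf
  -- the Lyapunov function and its derivative
  set L : ℝ → ℝ := fun t => z t ⬝ᵥ Q.mulVec (z t) + 2 * (z t ⬝ᵥ S.mulVec (u t))
      + u t ⬝ᵥ R.mulVec (u t) with hLdef
  set e : ℝ → ℝ := fun t => (u t - K.mulVec (z t)) ⬝ᵥ R.mulVec (u t - K.mulVec (z t)) with hedef
  set V : ℝ → ℝ := fun t => z t ⬝ᵥ P.mulVec (z t) with hVdef
  set V' : ℝ → ℝ := fun t =>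
    (F.mulVec (z t) + G.mulVec (u t)) ⬝ᵥ P.mulVec (z t)
      + z t ⬝ᵥ P.mulVec (F.mulVec (z t) + G.mulVec (u t)) with hV'def
  have hVderiv : ∀ t ∈ Set.Ici (0:ℝ), HasDerivAt V (V' t) t := by
    intro t ht
    have hcomp : ∀ i, HasDerivAt (fun s => z s i)
        ((F.mulVec (z t) + G.mulVec (u t)) i) t := hasDerivAt_pi.mp (hz t ht)
    have h1 : HasDerivAt (fun s => ∑ i, z s i * ∑ j, P i j * z s j)
        (∑ i, ((F.mulVec (z t) + G.mulVec (u t)) i * ∑ j, P i j * z t j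
          + z t i * ∑ j, P i j * ((F.mulVec (z t) + G.mulVec (u t)) j))) t := by
      refine HasDerivAt.fun_sum fun i _ => ?_
      exact (hcomp i).mul (HasDerivAt.fun_sum fun j _ => (hcomp j).const_mul (P i j))
    have hVeq : V = fun s => ∑ i, z s i * ∑ j, P i j * z s j := by
      funext s
      simp [hVdef, dotProduct, Matrix.mulVec]
    rw [hVeq]
    convert h1 using 1
    simp only [hV'def, dotProduct, Matrix.mulVec]
    rw [← Finset.sum_add_distrib]
  have hVlim : Tendsto V atTop (nhds 0) := by
    have hc : Continuous fun x : Fin n → ℝ => x ⬝ᵥ P.mulVec x := by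
      simp only [dotProduct, Matrix.mulVec]
      exact continuous_finset_sum _ fun i _ => (continuous_apply i).mul
        (continuous_finset_sum _ fun j _ => (continuous_const.mul (continuous_apply j) : Continuous fun x : Fin n → ℝ => P i j * x j))
    have := (hc.tendsto 0).comp hlim
    simpa [hVdef, Function.comp_def] using this
  have hV'eq : V' = fun t => e t - L t := by
    funext t
    have := key (z t) (u t)
    simp only [hLdef, hedef, hV'def] at *
    linarith
  have hV'int : IntegrableOn V' (Set.Ici (0:ℝ)) := by
    rw [hV'eq]; exact hint2.sub hint1
  have hIoi : ∫ t in Set.Ioi (0:ℝ), V' t = 0 - V 0 :=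
    integral_Ioi_of_hasDerivAt_of_tendsto' hVderiv
      (hV'int.mono_set Set.Ioi_subset_Ici_self) hVlim
  have hIci : ∫ t in Set.Ici (0:ℝ), V' t = -(V 0) := by
    rw [integral_Ici_eq_integral_Ioi, hIoi]; ring
  have hLfun : L = fun t => e t - V' t := by
    funext t; rw [hV'eq]; ring
  have hsplit : ∫ t in Set.Ici (0:ℝ), L t
      = (∫ t in Set.Ici (0:ℝ), e t) + V 0 := by
    calc ∫ t in Set.Ici (0:ℝ), L t = ∫ t in Set.Ici (0:ℝ), (e t - V' t) := by rw [← hLfun]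
    _ = (∫ t in Set.Ici (0:ℝ), e t) - ∫ t in Set.Ici (0:ℝ), V' t :=
        integral_sub hint2 hV'int
    _ = (∫ t in Set.Ici (0:ℝ), e t) + V 0 := by rw [hIci]; ring
  have he_nonneg : ∀ t, 0 ≤ e t := by
    intro t
    have := hRpd.posSemidef.dotProduct_mulVec_nonneg (u t - K.mulVec (z t))
    simpa [hedef] using this
  have hInt_e_nonneg : 0 ≤ ∫ t in Set.Ici (0:ℝ), e t :=
    setIntegral_nonneg measurableSet_Ici fun t _ => he_nonneg t
  constructor
  · have : ∫ t in Set.Ici (0:ℝ), L t ≥ V 0 := by rw [hsplit]; linarith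
    simp only [hLdef, hVdef] at this ⊢
    linarith
  · intro hopt
    have he0 : ∫ t in Set.Ici (0:ℝ), e t = 0 := by
      rw [setIntegral_congr_fun measurableSet_Ici
        (g := fun _ => (0:ℝ)) (fun t ht => by simp [hedef, hopt t ht])]
      simp
    have : ∫ t in Set.Ici (0:ℝ), L t = V 0 := by rw [hsplit, he0]; ring
    simp only [hLdef, hVdef] at this ⊢
    linarith
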